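/- Let α ≥ 2 be an even integer. Suppose x, y : {1,…,α} → {1,…,α} are functions with x(i) ≠ y(i) for every i, such that every level j ∈ {1,…,α} occurs exactly twice in the multiset {x(1), y(1), x(2), y(2), …, x(α), y(α)}. Then the total skip Skip = Σ_{i=1}^{α} |x(i) − y(i)| satisfies Skip ≤ α²/2. -/

import Mathlib

open Finset

private lemma gauss1 : ∀ n : ℕ, ∑ j ∈ Finset.range n, 2*(j+1) = n*(n+1) := by
  intro n
  induction n with
  | zero => simp
  | succ n ih => rw [Finset.sum_range_succ, ih]; ring

private lemma gauss2 (n : ℕ) : ∑ j ∈ Finset.range n, 2*(n-j) = n*(n+1) := by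
  have h := Finset.sum_range_reflect (fun j => 2*(j+1)) n
  rw [← gauss1 n, ← h]
  refine Finset.sum_congr rfl ?_
  intro j hj
  have hj' := Finset.mem_range.mp hj
  omega

theorem skip_le_of_even (α : ℕ) (hα : 2 ≤ α) (heven : Even α)
    (x y : ℕ → ℕ)
    (hx : ∀ i ∈ Finset.Icc 1 α, x i ∈ Finset.Icc 1 α)
    (hy : ∀ i ∈ Finset.Icc 1 α, y i ∈ Finset.Icc 1 α)
    (hne : ∀ i ∈ Finset.Icc 1 α, x i ≠ y i)
    (htwice : ∀ j ∈ Finset.Icc 1 α,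
      ((Finset.Icc 1 α).filter (fun i => x i = j)).card +
      ((Finset.Icc 1 α).filter (fun i => y i = j)).card = 2) :
    ∑ i ∈ Finset.Icc 1 α, |(x i : ℤ) - (y i : ℤ)| ≤ (α : ℤ) ^ 2 / 2 := by
  classical
  set I := Finset.Icc 1 α with hI
  -- fiberwise counting
  have fib : ∀ (f : ℕ → ℕ), (∀ i ∈ I, f i ∈ I) → ∀ (t : Finset ℕ), t ⊆ I →
      (I.filter (fun i => f i ∈ t)).card = ∑ k ∈ t, (I.filter (fun i => f i = k)).card := by
    intro f hf t ht
    rw [Finset.card_eq_sum_card_fiberwise (f := f) (s := I.filter (fun i => f i ∈ t)) (t := t)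
      (fun i hi => (Finset.mem_filter.mp hi).2)]
    refine Finset.sum_congr rfl ?_
    intro k hk
    congr 1
    ext i
    simp only [Finset.mem_filter]
    constructor
    · rintro ⟨⟨h1, _⟩, h2⟩; exact ⟨h1, h2⟩
    · rintro ⟨h1, h2⟩; exact ⟨⟨h1, h2 ▸ hk⟩, h2⟩
  have hcount : ∀ (t : Finset ℕ), t ⊆ I →
      (I.filter (fun i => x i ∈ t)).card + (I.filter (fun i => y i ∈ t)).card = 2 * t.card := by
    intro t ht
    rw [fib x hx t ht, fib y hy t ht, ← Finset.sum_add_distrib]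
    rw [Finset.sum_congr rfl (fun k hk => htwice k (ht hk))]
    rw [Finset.sum_const, smul_eq_mul, mul_comm]
  set C : ℕ → ℕ := fun j =>
    (I.filter (fun i => min (x i) (y i) ≤ j ∧ j < max (x i) (y i))).card with hCdef
  -- bounds on C
  have hC1 : ∀ j, 1 ≤ j → j < α → C j ≤ 2 * j := by
    intro j h1 h2
    have hsub : Finset.Icc 1 j ⊆ I := Finset.Icc_subset_Icc le_rfl (le_of_lt h2)
    have hc := hcount _ hsub
    rw [Nat.card_Icc] at hc
    have hle : (I.filter (fun i => min (x i) (y i) ≤ j ∧ j < max (x i) (y i))) ⊆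
        (I.filter (fun i => x i ∈ Finset.Icc 1 j)) ∪ (I.filter (fun i => y i ∈ Finset.Icc 1 j)) := by
      intro i hi
      simp only [Finset.mem_filter, Finset.mem_union, Finset.mem_Icc] at hi ⊢
      have hxi := Finset.mem_Icc.mp (hx i hi.1)
      have hyi := Finset.mem_Icc.mp (hy i hi.1)
      obtain ⟨hiI, hmin, hmax⟩ := hi
      rcases (show x i ≤ j ∨ y i ≤ j by omega) with h | h
      · exact Or.inl ⟨hiI, by omega, h⟩
      · exact Or.inr ⟨hiI, by omega, h⟩
    calc C j ≤ ((I.filter (fun i => x i ∈ Finset.Icc 1 j)) ∪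
          (I.filter (fun i => y i ∈ Finset.Icc 1 j))).card := Finset.card_le_card hle
      _ ≤ _ := Finset.card_union_le _ _
      _ ≤ 2 * j := by omega
  have hC2 : ∀ j, 1 ≤ j → j < α → C j ≤ 2 * (α - j) := by
    intro j h1 h2
    have hsub : Finset.Icc (j+1) α ⊆ I := Finset.Icc_subset_Icc (by omega) le_rfl
    have hc := hcount _ hsub
    rw [Nat.card_Icc] at hc
    have hle : (I.filter (fun i => min (x i) (y i) ≤ j ∧ j < max (x i) (y i))) ⊆
        (I.filter (fun i => x i ∈ Finset.Icc (j+1) α)) ∪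
        (I.filter (fun i => y i ∈ Finset.Icc (j+1) α)) := by
      intro i hi
      simp only [Finset.mem_filter, Finset.mem_union, Finset.mem_Icc] at hi ⊢
      have hxi := Finset.mem_Icc.mp (hx i hi.1)
      have hyi := Finset.mem_Icc.mp (hy i hi.1)
      obtain ⟨hiI, hmin, hmax⟩ := hi
      rcases (show j + 1 ≤ x i ∨ j + 1 ≤ y i by omega) with h | h
      · exact Or.inl ⟨hiI, h, by omega⟩
      · exact Or.inr ⟨hiI, h, by omega⟩
    calc C j ≤ ((I.filter (fun i => x i ∈ Finset.Icc (j+1) α)) ∪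
          (I.filter (fun i => y i ∈ Finset.Icc (j+1) α))).card := Finset.card_le_card hle
      _ ≤ _ := Finset.card_union_le _ _
      _ ≤ 2 * (α - j) := by omega
  -- rewrite the skip sum as counting over thresholds
  have key : ∀ i ∈ I, |(x i : ℤ) - (y i : ℤ)| =
      ((max (x i) (y i) - min (x i) (y i) : ℕ) : ℤ) := by
    intro i hi
    rcases abs_cases ((x i : ℤ) - (y i : ℤ)) with ⟨h, h'⟩ | ⟨h, h'⟩ <;> rw [h] <;> omega
  have step1 : ∀ i ∈ I, max (x i) (y i) - min (x i) (y i) =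
      ((Finset.Ico 1 α).filter (fun j => min (x i) (y i) ≤ j ∧ j < max (x i) (y i))).card := by
    intro i hi
    have hxi := Finset.mem_Icc.mp (hx i hi)
    have hyi := Finset.mem_Icc.mp (hy i hi)
    have : (Finset.Ico 1 α).filter (fun j => min (x i) (y i) ≤ j ∧ j < max (x i) (y i)) =
        Finset.Ico (min (x i) (y i)) (max (x i) (y i)) := by
      ext j
      simp only [Finset.mem_filter, Finset.mem_Ico]
      omega
    rw [this, Nat.card_Ico]
  have snat : ∑ i ∈ I, (max (x i) (y i) - min (x i) (y i)) = ∑ j ∈ Finset.Ico 1 α, C j := by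
    rw [Finset.sum_congr rfl step1]
    have : ∀ i ∈ I, ((Finset.Ico 1 α).filter
        (fun j => min (x i) (y i) ≤ j ∧ j < max (x i) (y i))).card =
        ∑ j ∈ Finset.Ico 1 α, if min (x i) (y i) ≤ j ∧ j < max (x i) (y i) then 1 else 0 := by
      intro i _; rw [Finset.card_filter]
    rw [Finset.sum_congr rfl this, Finset.sum_comm]
    refine Finset.sum_congr rfl ?_
    intro j _
    exact (Finset.card_filter _ _).symm
  -- main nat bound
  obtain ⟨m, hm⟩ := heven
  have hm1 : 1 ≤ m := by omega
  have hmain : ∑ j ∈ Finset.Ico 1 α, C j ≤ 2 * m * m := by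
    rw [← Finset.sum_Ico_consecutive (fun j => C j) (show 1 ≤ m + 1 by omega)
      (show m + 1 ≤ α by omega)]
    have hA : ∑ j ∈ Finset.Ico 1 (m+1), C j ≤ m * (m + 1) := by
      calc ∑ j ∈ Finset.Ico 1 (m+1), C j ≤ ∑ j ∈ Finset.Ico 1 (m+1), 2 * j := by
            refine Finset.sum_le_sum ?_
            intro j hj
            have := Finset.mem_Ico.mp hj
            exact hC1 j this.1 (by omega)
        _ = ∑ j ∈ Finset.range m, 2 * (j + 1) := by
            rw [Finset.sum_Ico_eq_sum_range]
            refine Finset.sum_congr (by norm_num) ?_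
            intro j _; ring_nf
        _ = m * (m + 1) := gauss1 m
    have hB : ∑ j ∈ Finset.Ico (m+1) α, C j ≤ (m - 1) * m := by
      calc ∑ j ∈ Finset.Ico (m+1) α, C j ≤ ∑ j ∈ Finset.Ico (m+1) α, 2 * (α - j) := by
            refine Finset.sum_le_sum ?_
            intro j hj
            have := Finset.mem_Ico.mp hj
            exact hC2 j (by omega) this.2
        _ = ∑ j ∈ Finset.range (m - 1), 2 * ((m - 1) - j) := by
            rw [Finset.sum_Ico_eq_sum_range, show α - (m+1) = m - 1 by omega]
            refine Finset.sum_congr rfl ?_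
            intro j _
            congr 1
            omega
        _ = (m - 1) * m := by
            rw [gauss2 (m - 1)]
            congr 1
            omega
    have hsum : m * (m + 1) + (m - 1) * m = 2 * m * m := by
      obtain ⟨k, rfl⟩ : ∃ k, m = k + 1 := ⟨m - 1, by omega⟩
      simp only [Nat.add_sub_cancel]
      ring
    exact le_trans (Nat.add_le_add hA hB) hsum.le
  -- put it together
  have hfinal : ∑ i ∈ I, (max (x i) (y i) - min (x i) (y i)) ≤ α ^ 2 / 2 := by
    rw [snat]
    have : α ^ 2 / 2 = 2 * m * m := by
      subst hm
      have : (m + m) ^ 2 = 2 * (2 * m * m) := by ring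
      rw [this, Nat.mul_div_cancel_left _ (by norm_num)]
    omega
  calc ∑ i ∈ I, |(x i : ℤ) - (y i : ℤ)|
      = ((∑ i ∈ I, (max (x i) (y i) - min (x i) (y i)) : ℕ) : ℤ) := by
        rw [Nat.cast_sum]
        exact Finset.sum_congr rfl key
    _ ≤ ((α ^ 2 / 2 : ℕ) : ℤ) := by exact_mod_cast hfinal
    _ = (α : ℤ) ^ 2 / 2 := by
        rw [Int.natCast_div]
        push_cast
        rfl
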